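/- arXiv:2412.07138 — 2 statements merged into one kernel-verified Lean document; each statement's English description precedes it below -/
import Mathlib

section
/- (Bias of the two-point Gaussian estimator against the true gradient.) Let d : ℕ, L ≥ 0 and μ > 0, and let f : EuclideanSpace ℝ (Fin d) → ℝ have L-Lipschitz gradient. Then for every x, ‖∫ ((f(x + μ • u) − f(x))/μ) • u ∂γ_d(u) − ∇f(x)‖ ≤ (μ/2)·L·(d+3)^{3/2}. -/
open MeasureTheory RealInnerProductSpace

/-- The standard Gaussian measure on `EuclideanSpace ℝ (Fin d)`, i.e. the product of `d`
copies of the real standard Gaussian measure. -/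
noncomputable def stdGaussian (d : ℕ) : Measure (EuclideanSpace ℝ (Fin d)) :=
  Measure.map (WithLp.toLp 2) (Measure.pi (fun _ : Fin d => ProbabilityTheory.gaussianReal 0 1))

open Real ProbabilityTheory

noncomputable def gpdf (x : ℝ) : ℝ := (Real.sqrt (2 * π))⁻¹ * Real.exp (-x ^ 2 / 2)

lemma gpdf_eq (x : ℝ) : gaussianPDFReal 0 1 x = gpdf x := by
  simp [gaussianPDFReal_def, gpdf]

lemma gpdf_nonneg (x : ℝ) : 0 ≤ gpdf x := by
  rw [← gpdf_eq]; exact gaussianPDFReal_nonneg 0 1 x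

lemma gpdf_meas : Measurable gpdf := by
  have := measurable_gaussianPDFReal 0 1
  simpa [funext gpdf_eq] using this

lemma gaussianReal_eq : gaussianReal 0 1 =
    (volume : Measure ℝ).withDensity (fun x => ((gpdf x).toNNReal : ENNReal)) := by
  rw [gaussianReal_of_var_ne_zero 0 one_ne_zero]
  congr 1
  ext x
  show ENNReal.ofReal (gaussianPDFReal 0 1 x) = _
  rw [gpdf_eq, ENNReal.ofReal]

lemma integral_gaussianReal (g : ℝ → ℝ) :
    ∫ x, g x ∂(gaussianReal 0 1) = ∫ x, gpdf x * g x := by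
  rw [gaussianReal_eq, integral_withDensity_eq_integral_smul (gpdf_meas.real_toNNReal) g]
  simp only [NNReal.smul_def, Real.coe_toNNReal _ (gpdf_nonneg _), smul_eq_mul]

lemma integrable_gaussianReal_iff (g : ℝ → ℝ) :
    Integrable g (gaussianReal 0 1) ↔ Integrable (fun x => gpdf x * g x) := by
  rw [gaussianReal_eq, integrable_withDensity_iff_integrable_smul (gpdf_meas.real_toNNReal)]
  constructor <;> intro h <;> [skip; skip] <;>
    · refine h.congr (Filter.Eventually.of_forall fun x => ?_)
      simp [NNReal.smul_def, Real.coe_toNNReal _ (gpdf_nonneg _)]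

lemma integrable_pow_mul_gpdf (k : ℕ) :
    Integrable (fun x : ℝ => gpdf x * x ^ k) := by
  have h : Integrable (fun x : ℝ => x ^ (k : ℝ) * Real.exp (-(1/2) * x ^ 2)) :=
    integrable_rpow_mul_exp_neg_mul_sq (by norm_num)
      (lt_of_lt_of_le neg_one_lt_zero (Nat.cast_nonneg k))
  simp_rw [Real.rpow_natCast] at h
  refine (h.const_mul ((Real.sqrt (2 * π))⁻¹)).congr
    (Filter.Eventually.of_forall fun x => ?_)
  simp only [gpdf]
  ring_nf

lemma integrable_pow_gaussian (k : ℕ) :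
    Integrable (fun x : ℝ => x ^ k) (gaussianReal 0 1) :=
  (integrable_gaussianReal_iff _).mpr (integrable_pow_mul_gpdf k)

lemma integral_id_gaussian : ∫ x, x ∂(gaussianReal 0 1) = 0 := by
  rw [integral_gaussianReal]
  have hmp := (Measure.measurePreserving_neg (volume : Measure ℝ))
  have h := hmp.integral_comp (Homeomorph.neg ℝ).measurableEmbedding
    (fun x => gpdf x * x)
  have hodd : ∀ x : ℝ, gpdf (-x) * (-x) = -(gpdf x * x) := by
    intro x; simp only [gpdf, neg_sq]; ring
  rw [show (fun x : ℝ => gpdf (Neg.neg x) * (Neg.neg x)) = fun x => -(gpdf x * x) from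
    funext fun x => hodd x] at h
  rw [integral_neg] at h
  linarith [h]

lemma integral_pow_mul_gpdf {q : ℕ} (hq : Even q) :
    ∫ x : ℝ, gpdf x * x ^ q
      = (Real.sqrt (2 * π))⁻¹ * (2 : ℝ) ^ (((q : ℝ) + 1) / 2) * Real.Gamma (((q : ℝ) + 1) / 2) := by
  have hconst : ∫ x : ℝ, gpdf x * x ^ q
      = (Real.sqrt (2 * π))⁻¹ * ∫ x : ℝ, x ^ q * Real.exp (-x ^ 2 / 2) := by
    rw [← integral_const_mul]
    congr 1; funext x; simp only [gpdf]; ring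
  have habs : ∀ x : ℝ, |x| ^ q * Real.exp (-|x| ^ 2 / 2) = x ^ q * Real.exp (-x ^ 2 / 2) := by
    intro x; rw [hq.pow_abs, sq_abs]
  have h2 : ∫ x : ℝ, x ^ q * Real.exp (-x ^ 2 / 2)
      = 2 * ∫ x in Set.Ioi (0:ℝ), x ^ q * Real.exp (-x ^ 2 / 2) := by
    rw [← integral_comp_abs (f := fun x => x ^ q * Real.exp (-x ^ 2 / 2))]
    congr 1; funext x; exact (habs x).symm
  have h3 : ∫ x in Set.Ioi (0:ℝ), x ^ q * Real.exp (-x ^ 2 / 2)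
      = ∫ x in Set.Ioi (0:ℝ), x ^ (q : ℝ) * Real.exp (-(1/2) * x ^ (2:ℝ)) := by
    refine setIntegral_congr_fun measurableSet_Ioi fun x hx => ?_
    rw [Real.rpow_natCast, Real.rpow_two]
    ring_nf
  have h4 := integral_rpow_mul_exp_neg_mul_rpow (p := 2) (q := (q:ℝ)) (b := 1/2)
    (by norm_num) (lt_of_lt_of_le neg_one_lt_zero (Nat.cast_nonneg q)) (by norm_num)
  have h5 : ((1:ℝ)/2) ^ (-(((q:ℝ)) + 1) / 2) = (2:ℝ) ^ (((q:ℝ) + 1) / 2) := by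
    rw [one_div, Real.inv_rpow (by norm_num), ← Real.rpow_neg (by norm_num)]
    norm_num
    ring_nf
  rw [hconst, h2, h3, h4, h5]
  ring

lemma sqrt_two_pi_eq : Real.sqrt (2 * π) = Real.sqrt 2 * Real.sqrt π :=
  Real.sqrt_mul (by norm_num) π

lemma rpow_three_halves : (2:ℝ) ^ ((3:ℝ)/2) = 2 * Real.sqrt 2 := by
  rw [show (3:ℝ)/2 = 1 + 1/2 by norm_num, Real.rpow_add (by norm_num), Real.rpow_one,
    ← Real.sqrt_eq_rpow]

lemma rpow_five_halves : (2:ℝ) ^ ((5:ℝ)/2) = 4 * Real.sqrt 2 := by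
  rw [show (5:ℝ)/2 = 2 + 1/2 by norm_num, Real.rpow_add (by norm_num),
    ← Real.sqrt_eq_rpow, show (2:ℝ) ^ (2:ℝ) = 4 by
      rw [show (2:ℝ) = ((2:ℕ):ℝ) from rfl, Real.rpow_natCast]; norm_num]

lemma gamma_three_halves : Real.Gamma ((3:ℝ)/2) = Real.sqrt π / 2 := by
  rw [show (3:ℝ)/2 = 1/2 + 1 by norm_num, Real.Gamma_add_one (by norm_num),
    Real.Gamma_one_half_eq]
  ring

lemma gamma_five_halves : Real.Gamma ((5:ℝ)/2) = 3 * Real.sqrt π / 4 := by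
  rw [show (5:ℝ)/2 = 3/2 + 1 by norm_num, Real.Gamma_add_one (by norm_num),
    gamma_three_halves]
  ring

lemma moment_two_gaussian : ∫ x, x ^ 2 ∂(gaussianReal 0 1) = 1 := by
  rw [integral_gaussianReal, integral_pow_mul_gpdf (by norm_num : Even 2)]
  norm_num
  rw [rpow_three_halves, gamma_three_halves]
  have h2 : Real.sqrt 2 ≠ 0 := by positivity
  have hp : Real.sqrt π ≠ 0 := by positivity
  field_simp

lemma moment_four_gaussian : ∫ x, x ^ 4 ∂(gaussianReal 0 1) = 3 := by
  rw [integral_gaussianReal, integral_pow_mul_gpdf (⟨2, rfl⟩ : Even 4)]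
  norm_num
  rw [rpow_five_halves, gamma_five_halves]
  have h2 : Real.sqrt 2 ≠ 0 := by positivity
  have hp : Real.sqrt π ≠ 0 := by positivity
  field_simp

lemma pi_integral_prod {d : ℕ} (g : Fin d → ℝ → ℝ) :
    ∫ x : Fin d → ℝ, ∏ i, g i (x i) ∂(Measure.pi fun _ => gaussianReal 0 1)
      = ∏ i, ∫ x, g i x ∂(gaussianReal 0 1) := by
  letI : MeasureSpace ℝ := ⟨gaussianReal 0 1⟩
  haveI : SigmaFinite (volume : Measure ℝ) :=
    (inferInstance : SigmaFinite (gaussianReal 0 1))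
  exact MeasureTheory.integral_fin_nat_prod_eq_prod g

lemma pi_integrable_prod {d : ℕ} {g : Fin d → ℝ → ℝ}
    (hg : ∀ i, Integrable (g i) (gaussianReal 0 1)) :
    Integrable (fun x : Fin d → ℝ => ∏ i, g i (x i))
      (Measure.pi fun _ => gaussianReal 0 1) := by
  letI : MeasureSpace ℝ := ⟨gaussianReal 0 1⟩
  haveI : SigmaFinite (volume : Measure ℝ) :=
    (inferInstance : SigmaFinite (gaussianReal 0 1))
  exact MeasureTheory.Integrable.fin_nat_prod hg

lemma sg_integral {E : Type*} [NormedAddCommGroup E] [NormedSpace ℝ E] {d : ℕ}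
    (F : EuclideanSpace ℝ (Fin d) → E) :
    ∫ u, F u ∂(_root_.stdGaussian d)
      = ∫ x : Fin d → ℝ, F (WithLp.toLp 2 x) ∂(Measure.pi fun _ => gaussianReal 0 1) :=
  integral_map_equiv (MeasurableEquiv.toLp 2 (Fin d → ℝ)) F

instance (d : ℕ) : IsProbabilityMeasure (stdGaussian d) := by
  rw [_root_.stdGaussian]
  exact Measure.isProbabilityMeasure_map (MeasurableEquiv.toLp 2 (Fin d → ℝ)).measurable.aemeasurable

/-- A family of functions that is `g` at coordinate `i` and `1` elsewhere. -/
noncomputable def oneAt {d : ℕ} (i : Fin d) (g : ℝ → ℝ) : Fin d → ℝ → ℝ :=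
  fun j => if j = i then g else fun _ => 1

lemma prod_oneAt {d : ℕ} (i : Fin d) (g : ℝ → ℝ) (x : Fin d → ℝ) :
    ∏ j, oneAt i g j (x j) = g (x i) := by
  rw [Finset.prod_eq_single i]
  · simp [oneAt]
  · intro j _ hj; simp [oneAt, hj]
  · intro h; exact absurd (Finset.mem_univ i) h

/-- A family of functions that is `g` at `i`, `h` at `j`, and `1` elsewhere. -/
noncomputable def twoAt {d : ℕ} (i j : Fin d) (g h : ℝ → ℝ) : Fin d → ℝ → ℝ :=
  fun k => if k = i then g else if k = j then h else fun _ => 1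

lemma prod_twoAt {d : ℕ} {i j : Fin d} (hij : i ≠ j) (g h : ℝ → ℝ) (x : Fin d → ℝ) :
    ∏ k, twoAt i j g h k (x k) = g (x i) * h (x j) := by
  rw [← Finset.prod_subset (Finset.subset_univ ({i, j} : Finset (Fin d)))
    (by intro k _ hk
        simp only [Finset.mem_insert, Finset.mem_singleton, not_or] at hk
        simp [twoAt, hk.1, hk.2])]
  rw [Finset.prod_pair hij]
  simp [twoAt, hij, hij.symm]

lemma integral_coord_pow {d : ℕ} (i : Fin d) (k : ℕ) :
    ∫ u : EuclideanSpace ℝ (Fin d), (u i) ^ k ∂(stdGaussian d)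
      = ∫ x, x ^ k ∂(ProbabilityTheory.gaussianReal 0 1) := by
  have h : ∀ x : Fin d → ℝ, (x i) ^ k = ∏ j, oneAt i (fun y => y ^ k) j (x j) :=
    fun x => (prod_oneAt i _ x).symm
  rw [sg_integral]
  show ∫ x : Fin d → ℝ, (x i) ^ k ∂(Measure.pi fun _ => ProbabilityTheory.gaussianReal 0 1) = _
  rw [show (fun x : Fin d → ℝ => (x i) ^ k) = fun x => ∏ j, oneAt i (fun y => y ^ k) j (x j)
    from funext h, pi_integral_prod]
  rw [Finset.prod_eq_single i] <;> simp [oneAt]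
  intro j hj; simp [hj]

lemma integrable_coord_pow {d : ℕ} (i : Fin d) (k : ℕ) :
    Integrable (fun u : EuclideanSpace ℝ (Fin d) => (u i) ^ k) (stdGaussian d) := by
  refine (integrable_map_equiv (MeasurableEquiv.toLp 2 (Fin d → ℝ)) _).mpr ?_
  show Integrable (fun x : Fin d → ℝ => (x i) ^ k)
    (Measure.pi fun _ => ProbabilityTheory.gaussianReal 0 1)
  have h : ∀ x : Fin d → ℝ, (x i) ^ k = ∏ j, oneAt i (fun y => y ^ k) j (x j) :=
    fun x => (prod_oneAt i _ x).symm
  rw [show (fun x : Fin d → ℝ => (x i) ^ k) = fun x => ∏ j, oneAt i (fun y => y ^ k) j (x j)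
    from funext h]
  refine pi_integrable_prod fun j => ?_
  by_cases hj : j = i
  · subst hj; simpa [oneAt] using integrable_pow_gaussian k
  · simpa [oneAt, hj] using integrable_const (1 : ℝ)

lemma integral_coord_two {d : ℕ} {i j : Fin d} (hij : i ≠ j) (g h : ℝ → ℝ) :
    ∫ u : EuclideanSpace ℝ (Fin d), g (u i) * h (u j) ∂(stdGaussian d)
      = (∫ x, g x ∂(ProbabilityTheory.gaussianReal 0 1))
        * (∫ x, h x ∂(ProbabilityTheory.gaussianReal 0 1)) := by
  rw [sg_integral]
  show ∫ x : Fin d → ℝ, g (x i) * h (x j)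
      ∂(Measure.pi fun _ => ProbabilityTheory.gaussianReal 0 1) = _
  rw [show (fun x : Fin d → ℝ => g (x i) * h (x j))
      = fun x => ∏ k, twoAt i j g h k (x k) from funext fun x => (prod_twoAt hij g h x).symm,
    pi_integral_prod]
  rw [← Finset.prod_subset (Finset.subset_univ ({i, j} : Finset (Fin d)))
    (by intro k _ hk
        simp only [Finset.mem_insert, Finset.mem_singleton, not_or] at hk
        simp [twoAt, hk.1, hk.2])]
  rw [Finset.prod_pair hij]
  simp [twoAt, hij, hij.symm]

lemma integrable_coord_two {d : ℕ} {i j : Fin d} (hij : i ≠ j) {g h : ℝ → ℝ}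
    (hg : Integrable g (ProbabilityTheory.gaussianReal 0 1))
    (hh : Integrable h (ProbabilityTheory.gaussianReal 0 1)) :
    Integrable (fun u : EuclideanSpace ℝ (Fin d) => g (u i) * h (u j)) (stdGaussian d) := by
  refine (integrable_map_equiv (MeasurableEquiv.toLp 2 (Fin d → ℝ)) _).mpr ?_
  show Integrable (fun x : Fin d → ℝ => g (x i) * h (x j))
    (Measure.pi fun _ => ProbabilityTheory.gaussianReal 0 1)
  rw [show (fun x : Fin d → ℝ => g (x i) * h (x j))
      = fun x => ∏ k, twoAt i j g h k (x k) from funext fun x => (prod_twoAt hij g h x).symm]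
  refine pi_integrable_prod fun k => ?_
  by_cases hki : k = i
  · subst hki; simpa [twoAt] using hg
  · by_cases hkj : k = j
    · subst hkj; simpa [twoAt, hki] using hh
    · simpa [twoAt, hki, hkj] using integrable_const (1 : ℝ)

lemma integral_coord_mul {d : ℕ} (i j : Fin d) :
    ∫ u : EuclideanSpace ℝ (Fin d), (u i) * (u j) ∂(stdGaussian d)
      = if i = j then 1 else 0 := by
  by_cases hij : i = j
  · subst hij
    rw [if_pos rfl, show (fun u : EuclideanSpace ℝ (Fin d) => (u i) * (u i))
        = fun u => (u i) ^ 2 from funext fun u => (sq (u i)).symm,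
      integral_coord_pow i 2, moment_two_gaussian]
  · rw [if_neg hij, integral_coord_two hij (fun x => x) (fun x => x)]
    have : ∫ x, x ∂(ProbabilityTheory.gaussianReal 0 1) = 0 := integral_id_gaussian
    rw [this, zero_mul]

lemma integrable_coord_mul {d : ℕ} (i j : Fin d) :
    Integrable (fun u : EuclideanSpace ℝ (Fin d) => (u i) * (u j)) (stdGaussian d) := by
  by_cases hij : i = j
  · subst hij
    simpa [sq] using integrable_coord_pow (d := d) i 2
  · exact integrable_coord_two hij (by simpa using integrable_pow_gaussian 1)
      (by simpa using integrable_pow_gaussian 1)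

lemma integral_coord_sq_sq {d : ℕ} (i j : Fin d) :
    ∫ u : EuclideanSpace ℝ (Fin d), (u i) ^ 2 * (u j) ^ 2 ∂(stdGaussian d)
      = if i = j then 3 else 1 := by
  by_cases hij : i = j
  · subst hij
    rw [if_pos rfl]
    have : (fun u : EuclideanSpace ℝ (Fin d) => (u i) ^ 2 * (u i) ^ 2)
        = fun u => (u i) ^ 4 := by funext u; ring
    rw [this, integral_coord_pow i 4, moment_four_gaussian]
  · rw [if_neg hij, integral_coord_two hij (fun x => x ^ 2) (fun x => x ^ 2),
      moment_two_gaussian]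
    norm_num

lemma integrable_coord_sq_sq {d : ℕ} (i j : Fin d) :
    Integrable (fun u : EuclideanSpace ℝ (Fin d) => (u i) ^ 2 * (u j) ^ 2) (stdGaussian d) := by
  by_cases hij : i = j
  · subst hij
    have : (fun u : EuclideanSpace ℝ (Fin d) => (u i) ^ 2 * (u i) ^ 2)
        = fun u => (u i) ^ 4 := by funext u; ring
    rw [this]; exact integrable_coord_pow i 4
  · exact integrable_coord_two hij (integrable_pow_gaussian 2) (integrable_pow_gaussian 2)

lemma norm_sq_eq_sum {d : ℕ} (u : EuclideanSpace ℝ (Fin d)) :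
    ‖u‖ ^ 2 = ∑ i, (u i) ^ 2 := by
  rw [EuclideanSpace.norm_eq]
  rw [Real.sq_sqrt (Finset.sum_nonneg fun i _ => sq_nonneg _)]
  simp [sq_abs]

lemma integrable_norm_sq {d : ℕ} :
    Integrable (fun u : EuclideanSpace ℝ (Fin d) => ‖u‖ ^ 2) (stdGaussian d) := by
  rw [show (fun u : EuclideanSpace ℝ (Fin d) => ‖u‖ ^ 2)
      = fun u => ∑ i, (u i) ^ 2 from funext norm_sq_eq_sum]
  exact integrable_finset_sum _ fun i _ => integrable_coord_pow i 2

lemma integral_norm_sq {d : ℕ} :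
    ∫ u : EuclideanSpace ℝ (Fin d), ‖u‖ ^ 2 ∂(stdGaussian d) = d := by
  rw [show (fun u : EuclideanSpace ℝ (Fin d) => ‖u‖ ^ 2)
      = fun u => ∑ i, (u i) ^ 2 from funext norm_sq_eq_sum]
  rw [integral_finset_sum _ fun i _ => integrable_coord_pow i 2]
  have : ∀ i : Fin d, ∫ u : EuclideanSpace ℝ (Fin d), (u i) ^ 2 ∂(stdGaussian d) = 1 := by
    intro i; rw [integral_coord_pow i 2, moment_two_gaussian]
  simp [this]

lemma norm_four_eq_sum {d : ℕ} (u : EuclideanSpace ℝ (Fin d)) :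
    ‖u‖ ^ 4 = ∑ i, ∑ j, (u i) ^ 2 * (u j) ^ 2 := by
  have : ‖u‖ ^ 4 = (‖u‖ ^ 2) ^ 2 := by ring
  rw [this, norm_sq_eq_sum, sq, Finset.sum_mul_sum]

lemma integrable_norm_four {d : ℕ} :
    Integrable (fun u : EuclideanSpace ℝ (Fin d) => ‖u‖ ^ 4) (stdGaussian d) := by
  rw [show (fun u : EuclideanSpace ℝ (Fin d) => ‖u‖ ^ 4)
      = fun u => ∑ i, ∑ j, (u i) ^ 2 * (u j) ^ 2 from funext norm_four_eq_sum]
  exact integrable_finset_sum _ fun i _ =>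
    integrable_finset_sum _ fun j _ => integrable_coord_sq_sq i j

lemma integral_norm_four {d : ℕ} :
    ∫ u : EuclideanSpace ℝ (Fin d), ‖u‖ ^ 4 ∂(stdGaussian d) = (d : ℝ) ^ 2 + 2 * d := by
  rw [show (fun u : EuclideanSpace ℝ (Fin d) => ‖u‖ ^ 4)
      = fun u => ∑ i, ∑ j, (u i) ^ 2 * (u j) ^ 2 from funext norm_four_eq_sum]
  rw [integral_finset_sum _ fun i _ =>
    integrable_finset_sum _ fun j _ => integrable_coord_sq_sq i j]
  have h1 : ∀ i : Fin d,
      (∑ j, ∫ u : EuclideanSpace ℝ (Fin d), (u i) ^ 2 * (u j) ^ 2 ∂(stdGaussian d))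
        = (d : ℝ) + 2 := by
    intro i
    have h2 : ∀ j : Fin d, ∫ u : EuclideanSpace ℝ (Fin d), (u i) ^ 2 * (u j) ^ 2 ∂(stdGaussian d)
        = if i = j then 3 else 1 := fun j => integral_coord_sq_sq i j
    simp only [h2]
    rw [show (∑ j : Fin d, if i = j then (3:ℝ) else 1)
        = ∑ j : Fin d, (1 + if i = j then 2 else 0) from Finset.sum_congr rfl
          fun j _ => by by_cases h : i = j <;> simp [h] <;> norm_num]
    rw [Finset.sum_add_distrib]
    simp [Finset.sum_ite_eq]
  calc ∑ i : Fin d, ∫ u : EuclideanSpace ℝ (Fin d), ∑ j, (u i) ^ 2 * (u j) ^ 2 ∂(stdGaussian d)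
      = ∑ i : Fin d, ∑ j, ∫ u : EuclideanSpace ℝ (Fin d), (u i) ^ 2 * (u j) ^ 2 ∂(stdGaussian d) :=
        Finset.sum_congr rfl fun i _ =>
          integral_finset_sum _ fun j _ => integrable_coord_sq_sq i j
    _ = ∑ _i : Fin d, ((d : ℝ) + 2) := Finset.sum_congr rfl fun i _ => h1 i
    _ = (d : ℝ) * ((d : ℝ) + 2) := by simp [Finset.sum_const]; ring
    _ = (d : ℝ) ^ 2 + 2 * d := by ring

lemma integrable_norm_cubed {d : ℕ} :
    Integrable (fun u : EuclideanSpace ℝ (Fin d) => ‖u‖ ^ 3) (stdGaussian d) := by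
  refine Integrable.mono' (integrable_norm_sq.add integrable_norm_four)
    ((continuous_norm.pow 3).aestronglyMeasurable)
    (Filter.Eventually.of_forall fun u => ?_)
  rw [Real.norm_eq_abs, abs_of_nonneg (by positivity)]
  simp only [Pi.add_apply]
  rcases le_total (‖u‖) 1 with h | h
  · have : ‖u‖ ^ 3 ≤ ‖u‖ ^ 2 := pow_le_pow_of_le_one (norm_nonneg u) h (by norm_num)
    nlinarith [pow_nonneg (norm_nonneg u) 4]
  · have : ‖u‖ ^ 3 ≤ ‖u‖ ^ 4 := pow_le_pow_right₀ h (by norm_num)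
    nlinarith [pow_nonneg (norm_nonneg u) 2]

lemma integral_norm_cubed_le {d : ℕ} :
    ∫ u : EuclideanSpace ℝ (Fin d), ‖u‖ ^ 3 ∂(stdGaussian d)
      ≤ ((d : ℝ) + 3) ^ ((3 : ℝ) / 2) := by
  set a : ℝ := Real.sqrt ((d : ℝ) + 3) with ha
  have ha0 : 0 < a := Real.sqrt_pos.mpr (by positivity)
  have ha2 : a ^ 2 = (d : ℝ) + 3 := Real.sq_sqrt (by positivity)
  have hbound : ∀ u : EuclideanSpace ℝ (Fin d),
      ‖u‖ ^ 3 ≤ (a * ‖u‖ ^ 2 + a⁻¹ * ‖u‖ ^ 4) / 2 := by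
    intro u
    have h2 : 2 * (‖u‖ ^ 3) * a ≤ a ^ 2 * ‖u‖ ^ 2 + ‖u‖ ^ 4 := by
      nlinarith [sq_nonneg (a * ‖u‖ - ‖u‖ ^ 2)]
    have heq : (a * ‖u‖ ^ 2 + a⁻¹ * ‖u‖ ^ 4) / 2 = (a ^ 2 * ‖u‖ ^ 2 + ‖u‖ ^ 4) / (2 * a) := by
      field_simp
    rw [heq, le_div_iff₀ (by positivity)]
    linarith
  have hint2 : Integrable
      (fun u : EuclideanSpace ℝ (Fin d) => (a * ‖u‖ ^ 2 + a⁻¹ * ‖u‖ ^ 4) / 2) (stdGaussian d) :=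
    (((integrable_norm_sq.const_mul a).add (integrable_norm_four.const_mul a⁻¹)).div_const
      2).congr (Filter.Eventually.of_forall fun u => by simp [Pi.add_apply])
  have hle := integral_mono integrable_norm_cubed hint2 hbound
  refine hle.trans ?_
  rw [integral_div, integral_add (integrable_norm_sq.const_mul a)
    (integrable_norm_four.const_mul a⁻¹), integral_const_mul, integral_const_mul,
    integral_norm_sq, integral_norm_four]
  have hrpow : ((d : ℝ) + 3) ^ ((3 : ℝ) / 2) = a ^ 3 := by
    rw [ha, Real.sqrt_eq_rpow, ← Real.rpow_natCast (((d : ℝ) + 3) ^ ((1:ℝ)/2)) 3,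
      ← Real.rpow_mul (by positivity)]
    norm_num
  rw [hrpow]
  have hinv : a⁻¹ * a = 1 := inv_mul_cancel₀ ha0.ne'
  have hkey : a * (d : ℝ) + a⁻¹ * ((d : ℝ) ^ 2 + 2 * d) ≤ 2 * a ^ 3 := by
    have h1 : a⁻¹ * ((d : ℝ) ^ 2 + 2 * d) * a = (d : ℝ) ^ 2 + 2 * d := by
      field_simp
    nlinarith [ha2, ha0, Nat.cast_nonneg (α := ℝ) d]
  linarith

open RealInnerProductSpace in
lemma integrable_inner_smul {d : ℕ} (g : EuclideanSpace ℝ (Fin d)) :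
    Integrable (fun u : EuclideanSpace ℝ (Fin d) => ⟪g, u⟫ • u) (stdGaussian d) := by
  refine Integrable.mono' (integrable_norm_sq.const_mul ‖g‖)
    ((by fun_prop : Continuous fun u : EuclideanSpace ℝ (Fin d) => ⟪g, u⟫ • u).aestronglyMeasurable)
    (Filter.Eventually.of_forall fun u => ?_)
  rw [norm_smul, Real.norm_eq_abs]
  calc |⟪g, u⟫| * ‖u‖ ≤ (‖g‖ * ‖u‖) * ‖u‖ :=
        mul_le_mul_of_nonneg_right (abs_real_inner_le_norm g u) (norm_nonneg u)
    _ = ‖g‖ * ‖u‖ ^ 2 := by ring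

open RealInnerProductSpace in
lemma integral_inner_smul {d : ℕ} (g : EuclideanSpace ℝ (Fin d)) :
    ∫ u : EuclideanSpace ℝ (Fin d), ⟪g, u⟫ • u ∂(stdGaussian d) = g := by
  have hInt := integrable_inner_smul g
  refine PiLp.ext fun j => ?_
  have hproj := (EuclideanSpace.proj (𝕜 := ℝ) j).integral_comp_comm hInt
  have hco : ∀ u : EuclideanSpace ℝ (Fin d),
      (EuclideanSpace.proj (𝕜 := ℝ) j) (⟪g, u⟫ • u) = ∑ i, g i * (u i * u j) := by
    intro u
    rw [_root_.map_smul]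
    simp only [PiLp.proj_apply, smul_eq_mul]
    rw [PiLp.inner_apply]
    simp only [RCLike.inner_apply, conj_trivial]
    rw [Finset.sum_mul]
    exact Finset.sum_congr rfl fun i _ => by ring
  rw [show ((∫ u : EuclideanSpace ℝ (Fin d), ⟪g, u⟫ • u ∂(stdGaussian d)) j : ℝ)
      = (EuclideanSpace.proj (𝕜 := ℝ) j)
          (∫ u : EuclideanSpace ℝ (Fin d), ⟪g, u⟫ • u ∂(stdGaussian d)) from rfl]
  rw [← hproj]
  rw [show (fun u : EuclideanSpace ℝ (Fin d) => (EuclideanSpace.proj (𝕜 := ℝ) j) (⟪g, u⟫ • u))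
      = fun u => ∑ i, g i * (u i * u j) from funext hco]
  rw [integral_finset_sum _ fun i _ => (integrable_coord_mul i j).const_mul (g i)]
  have : ∀ i : Fin d, ∫ u : EuclideanSpace ℝ (Fin d), g i * (u i * u j) ∂(stdGaussian d)
      = g i * (if i = j then 1 else 0) := by
    intro i; rw [integral_const_mul, integral_coord_mul]
  rw [Finset.sum_congr rfl fun i _ => this i]
  simp [Finset.sum_ite_eq]

open RealInnerProductSpace in
lemma taylor_bound {d : ℕ} {L : ℝ} (hL : 0 ≤ L) {f : EuclideanSpace ℝ (Fin d) → ℝ}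
    (hdiff : Differentiable ℝ f)
    (hlip : ∀ x y, ‖gradient f x - gradient f y‖ ≤ L * ‖x - y‖)
    (x v : EuclideanSpace ℝ (Fin d)) :
    |f (x + v) - f x - ⟪gradient f x, v⟫| ≤ L / 2 * ‖v‖ ^ 2 := by
  have hgradcont : Continuous (gradient f) := by
    have : LipschitzWith L.toNNReal (gradient f) := by
      apply LipschitzWith.of_dist_le_mul
      intro a b
      rw [dist_eq_norm, dist_eq_norm, Real.coe_toNNReal L hL]
      exact hlip a b
    exact this.continuous
  set φ' : ℝ → ℝ := fun t => ⟪gradient f (x + t • v), v⟫ with hφ'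
  have hderiv : ∀ t : ℝ, HasDerivAt (fun s : ℝ => f (x + s • v)) (φ' t) t := by
    intro t
    have h1 : HasDerivAt (fun s : ℝ => x + s • v) v t := by
      simpa using ((hasDerivAt_id t).smul_const v).const_add x
    have h2 : HasFDerivAt f (InnerProductSpace.toDual ℝ _ (gradient f (x + t • v)))
        (x + t • v) := hasGradientAt_iff_hasFDerivAt.mp (hdiff _).hasGradientAt
    have := h2.comp_hasDerivAt t h1
    simpa only [Function.comp_def, InnerProductSpace.toDual_apply_apply] using this
  have hcont : Continuous φ' :=
    (hgradcont.comp (by continuity : Continuous fun t : ℝ => x + t • v)).inner continuous_const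
  have hii : IntervalIntegrable φ' volume 0 1 := hcont.intervalIntegrable 0 1
  have heq : ∫ t in (0:ℝ)..1, φ' t = f (x + v) - f x := by
    rw [intervalIntegral.integral_eq_sub_of_hasDerivAt (fun t _ => hderiv t) hii]
    simp
  have hconst : ∫ t in (0:ℝ)..1, (⟪gradient f x, v⟫ : ℝ) = ⟪gradient f x, v⟫ := by simp
  have hsub : f (x + v) - f x - ⟪gradient f x, v⟫
      = ∫ t in (0:ℝ)..1, (φ' t - ⟪gradient f x, v⟫) := by
    rw [intervalIntegral.integral_sub hii (intervalIntegrable_const), heq, hconst]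
  rw [hsub]
  have hbound : ∀ t ∈ Set.Ioc (0:ℝ) 1, |φ' t - ⟪gradient f x, v⟫| ≤ L * ‖v‖ ^ 2 * t := by
    intro t ht
    have : φ' t - ⟪gradient f x, v⟫ = ⟪gradient f (x + t • v) - gradient f x, v⟫ := by
      rw [inner_sub_left]
    rw [this]
    calc |⟪gradient f (x + t • v) - gradient f x, v⟫|
        ≤ ‖gradient f (x + t • v) - gradient f x‖ * ‖v‖ := abs_real_inner_le_norm _ _
      _ ≤ (L * ‖x + t • v - x‖) * ‖v‖ :=
          mul_le_mul_of_nonneg_right (hlip _ _) (norm_nonneg v)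
      _ = L * ‖v‖ ^ 2 * t := by
          rw [add_sub_cancel_left, norm_smul, Real.norm_eq_abs, abs_of_pos ht.1]
          ring
  have hmaj : IntervalIntegrable (fun t : ℝ => L * ‖v‖ ^ 2 * t) volume 0 1 :=
    (continuous_const.mul continuous_id).intervalIntegrable 0 1
  have := intervalIntegral.norm_integral_le_abs_of_norm_le (f := fun t => φ' t - ⟪gradient f x, v⟫)
    (g := fun t => L * ‖v‖ ^ 2 * t) (μ := volume) (a := 0) (b := 1)
    (by
      rw [Set.uIoc_of_le (by norm_num : (0:ℝ) ≤ 1)]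
      exact (MeasureTheory.ae_restrict_iff' measurableSet_Ioc).mpr
        (Filter.Eventually.of_forall fun t ht => by
          rw [Real.norm_eq_abs]; exact hbound t ht)) hmaj
  rw [← Real.norm_eq_abs]
  refine this.trans ?_
  rw [intervalIntegral.integral_const_mul, integral_id, abs_of_nonneg (by positivity)]
  norm_num
  ring_nf
  try exact le_refl _

/-- **Bias of the two-point Gaussian estimator against the true gradient.**
If `f` has `L`-Lipschitz gradient and `μ > 0`, then the mean of the two-point zeroth-order
gradient estimator at `x` differs from `∇f(x)` by at most `(μ/2)·L·(d+3)^{3/2}`. -/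
theorem two_point_estimator_bias
    (d : ℕ) (L μ : ℝ) (hL : 0 ≤ L) (hμ : 0 < μ)
    (f : EuclideanSpace ℝ (Fin d) → ℝ)
    (hdiff : Differentiable ℝ f)
    (hlip : ∀ x y, ‖gradient f x - gradient f y‖ ≤ L * ‖x - y‖) :
    ∀ x : EuclideanSpace ℝ (Fin d),
      ‖(∫ u : EuclideanSpace ℝ (Fin d), ((f (x + μ • u) - f x) / μ) • u ∂(stdGaussian d))
          - gradient f x‖ ≤ μ / 2 * L * ((d : ℝ) + 3) ^ ((3 : ℝ) / 2) := by
  intro x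
  set g : EuclideanSpace ℝ (Fin d) := gradient f x with hg
  set H : EuclideanSpace ℝ (Fin d) → EuclideanSpace ℝ (Fin d) :=
    fun u => ((f (x + μ • u) - f x) / μ) • u - ⟪g, u⟫ • u with hH
  have hHbound : ∀ u : EuclideanSpace ℝ (Fin d), ‖H u‖ ≤ L * μ / 2 * ‖u‖ ^ 3 := by
    intro u
    have h1 : H u = ((f (x + μ • u) - f x) / μ - ⟪g, u⟫) • u := by
      rw [hH, sub_smul]
    rw [h1, norm_smul, Real.norm_eq_abs]
    have h2 : (f (x + μ • u) - f x) / μ - ⟪g, u⟫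
        = (f (x + μ • u) - f x - ⟪g, μ • u⟫) / μ := by
      rw [real_inner_smul_right]
      field_simp
    have h3 := taylor_bound hL hdiff hlip x (μ • u)
    have h4 : ‖μ • u‖ ^ 2 = μ ^ 2 * ‖u‖ ^ 2 := by
      rw [norm_smul, Real.norm_eq_abs, abs_of_pos hμ]; ring
    have h5 : |(f (x + μ • u) - f x) / μ - ⟪g, u⟫| ≤ L * μ / 2 * ‖u‖ ^ 2 := by
      rw [h2, abs_div, abs_of_pos hμ, div_le_iff₀ hμ]
      calc |f (x + μ • u) - f x - ⟪g, μ • u⟫| ≤ L / 2 * ‖μ • u‖ ^ 2 := h3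
        _ = L * μ / 2 * ‖u‖ ^ 2 * μ := by rw [h4]; ring
    calc |(f (x + μ • u) - f x) / μ - ⟪g, u⟫| * ‖u‖
        ≤ (L * μ / 2 * ‖u‖ ^ 2) * ‖u‖ := mul_le_mul_of_nonneg_right h5 (norm_nonneg u)
      _ = L * μ / 2 * ‖u‖ ^ 3 := by ring
  have hHcont : Continuous H := by
    apply Continuous.sub
    · exact (((hdiff.continuous.comp
        (by fun_prop :
          Continuous fun u : EuclideanSpace ℝ (Fin d) => x + μ • u)).sub
        continuous_const).div_const μ).smul continuous_id
    · fun_prop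
  have hHint : Integrable H (stdGaussian d) :=
    Integrable.mono' (integrable_norm_cubed.const_mul (L * μ / 2))
      hHcont.aestronglyMeasurable (Filter.Eventually.of_forall hHbound)
  have hGint : Integrable (fun u : EuclideanSpace ℝ (Fin d) => (⟪g, u⟫ : ℝ) • u)
      (stdGaussian d) := integrable_inner_smul g
  have hFint : Integrable
      (fun u : EuclideanSpace ℝ (Fin d) => ((f (x + μ • u) - f x) / μ) • u)
      (stdGaussian d) := by
    have := hHint.add hGint
    refine this.congr (Filter.Eventually.of_forall fun u => ?_)
    simp [hH]
  have hsplit : (∫ u : EuclideanSpace ℝ (Fin d),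
        ((f (x + μ • u) - f x) / μ) • u ∂(stdGaussian d)) - g
      = ∫ u, H u ∂(stdGaussian d) := by
    rw [hH]
    rw [integral_sub hFint hGint, integral_inner_smul g]
  rw [hsplit]
  calc ‖∫ u, H u ∂(stdGaussian d)‖ ≤ ∫ u, ‖H u‖ ∂(stdGaussian d) :=
        norm_integral_le_integral_norm H
    _ ≤ ∫ u : EuclideanSpace ℝ (Fin d), L * μ / 2 * ‖u‖ ^ 3 ∂(stdGaussian d) :=
        integral_mono hHint.norm (integrable_norm_cubed.const_mul _)
          (fun u => hHbound u)
    _ = L * μ / 2 * ∫ u : EuclideanSpace ℝ (Fin d), ‖u‖ ^ 3 ∂(stdGaussian d) :=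
        integral_const_mul _ _
    _ ≤ L * μ / 2 * ((d : ℝ) + 3) ^ ((3 : ℝ) / 2) := by
        refine mul_le_mul_of_nonneg_left integral_norm_cubed_le (by positivity)
    _ = μ / 2 * L * ((d : ℝ) + 3) ^ ((3 : ℝ) / 2) := by ring
end

section
/- (Differentiability and smoothness of the μ-smooth approximation.) Let d : ℕ, L ≥ 0 and μ : ℝ, and let f : EuclideanSpace ℝ (Fin d) → ℝ have L-Lipschitz gradient. Define f_μ(x) := ∫ f(x + μ • u) ∂γ_d(u). Then f_μ is differentiable at every x with gradient ∇f_μ(x) = ∫ ∇f(x + μ • u) ∂γ_d(u), and this gradient is L-Lipschitz: ‖∇f_μ(x) − ∇f_μ(y)‖ ≤ L·‖x − y‖ for all x, y. In particular, f_μ also has L-Lipschitz gradient. -/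
open MeasureTheory RealInnerProductSpace

open Real ProbabilityTheory in
lemma aux_integrable_sq_mul_exp_neg_mul_sq {b : ℝ} (hb : 0 < b) :
    Integrable (fun x : ℝ => x ^ 2 * Real.exp (-b * x ^ 2)) := by
  have h2 : (0:ℝ) < b/2 := by positivity
  refine Integrable.mono' ((integrable_exp_neg_mul_sq h2).const_mul (2/b)) ?_ ?_
  · exact ((continuous_pow 2).mul
      ((continuous_const.mul (continuous_pow 2)).rexp)).aestronglyMeasurable
  · filter_upwards with x
    have h1 : x ^ 2 ≤ (2/b) * Real.exp ((b/2) * x ^ 2) := by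
      have h : (b/2) * x ^ 2 ≤ Real.exp ((b/2) * x ^ 2) := by
        have := Real.add_one_le_exp ((b/2) * x ^ 2); linarith
      have hb' : (0:ℝ) ≤ 2 / b := by positivity
      calc x ^ 2 = (2/b) * ((b/2) * x ^ 2) := by field_simp
        _ ≤ (2/b) * Real.exp ((b/2) * x ^ 2) := mul_le_mul_of_nonneg_left h hb'
    rw [Real.norm_eq_abs, abs_mul, abs_of_nonneg (sq_nonneg x),
      abs_of_nonneg (Real.exp_pos _).le]
    calc x ^ 2 * Real.exp (-b * x ^ 2)
        ≤ (2/b) * Real.exp ((b/2) * x ^ 2) * Real.exp (-b * x ^ 2) :=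
          mul_le_mul_of_nonneg_right h1 (Real.exp_pos _).le
      _ = (2/b) * Real.exp (-(b/2) * x ^ 2) := by
          rw [mul_assoc, ← Real.exp_add]; congr 2; ring

open Real ProbabilityTheory in
lemma aux_integrable_gaussianReal {g : ℝ → ℝ} (hg : Measurable g)
    (hint : Integrable (fun x => g x * Real.exp (-(1/2) * x ^ 2))) :
    Integrable g (gaussianReal 0 1) := by
  rw [gaussianReal_of_var_ne_zero 0 one_ne_zero,
    integrable_withDensity_iff (measurable_gaussianPDF 0 1)
      (Filter.Eventually.of_forall fun x => ENNReal.ofReal_lt_top)]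
  have hpdf : ∀ x : ℝ, (gaussianPDF 0 1 x).toReal
      = (Real.sqrt (2 * π))⁻¹ * Real.exp (-(1/2) * x ^ 2) := by
    intro x
    rw [gaussianPDF, ENNReal.toReal_ofReal (gaussianPDFReal_nonneg 0 1 x)]
    simp only [gaussianPDFReal, NNReal.coe_one, mul_one, sub_zero]
    rw [show -x ^ 2 / 2 = -(1/2) * x ^ 2 by ring]
  have := hint.const_mul ((Real.sqrt (2 * π))⁻¹)
  refine this.congr' ?_ (Filter.Eventually.of_forall fun x => ?_)
  · exact (hg.mul (measurable_gaussianPDF 0 1).ennreal_toReal).aestronglyMeasurable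
  · rw [hpdf x]; ring

open ProbabilityTheory in
lemma aux_integrable_abs_gaussian : Integrable (fun x : ℝ => |x|) (gaussianReal 0 1) := by
  refine aux_integrable_gaussianReal measurable_abs ?_
  have h := (integrable_mul_exp_neg_mul_sq (b := 1/2) (by norm_num)).abs
  refine h.congr (Filter.Eventually.of_forall fun x => ?_)
  simp [abs_mul, abs_of_nonneg (Real.exp_pos _).le]

open ProbabilityTheory in
lemma aux_integrable_sq_gaussian : Integrable (fun x : ℝ => x ^ 2) (gaussianReal 0 1) := by
  refine aux_integrable_gaussianReal (by fun_prop) ?_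
  simpa using aux_integrable_sq_mul_exp_neg_mul_sq (b := 1/2) (by norm_num)

open ProbabilityTheory in
lemma aux_measurePreserving_eval (d : ℕ) (i : Fin d) :
    MeasurePreserving (fun u : EuclideanSpace ℝ (Fin d) => u i)
      (stdGaussian d) (gaussianReal 0 1) := by
  classical
  have hm : Measurable (fun u : EuclideanSpace ℝ (Fin d) => u i) :=
    (measurable_pi_apply i).comp (WithLp.measurable_ofLp (p := 2) (X := Fin d → ℝ))
  have hT : Measurable (WithLp.toLp 2 : (Fin d → ℝ) → EuclideanSpace ℝ (Fin d)) :=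
    WithLp.measurable_toLp (p := 2) (X := Fin d → ℝ)
  refine ⟨hm, ?_⟩
  rw [_root_.stdGaussian, Measure.map_map hm hT]
  refine Measure.ext fun s hs => ?_
  have hmap : (Measure.map (fun v : Fin d → ℝ => v i)
        (Measure.pi (fun _ : Fin d => gaussianReal 0 1))) s
      = Measure.pi (fun _ : Fin d => gaussianReal 0 1) ((fun v : Fin d → ℝ => v i) ⁻¹' s) :=
    Measure.map_apply (measurable_pi_apply i) hs
  have h : (fun v : Fin d → ℝ => v i) ⁻¹' s
      = Set.pi Set.univ (Function.update (fun _ : Fin d => (Set.univ : Set ℝ)) i s) :=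
    Set.eval_preimage
  have hpi : Measure.pi (fun _ : Fin d => gaussianReal 0 1)
        (Set.pi Set.univ (Function.update (fun _ : Fin d => (Set.univ : Set ℝ)) i s))
      = ∏ j, gaussianReal 0 1 (Function.update (fun _ : Fin d => (Set.univ : Set ℝ)) i s j) :=
    Measure.pi_pi _ _
  change (Measure.map (fun v : Fin d → ℝ => v i)
    (Measure.pi (fun _ : Fin d => gaussianReal 0 1))) s = gaussianReal 0 1 s
  rw [hmap, h, hpi]
  simp [Function.update_apply, apply_ite (gaussianReal 0 1)]

open ProbabilityTheory in
lemma aux_integrable_norm (d : ℕ) :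
    Integrable (fun u : EuclideanSpace ℝ (Fin d) => ‖u‖) (stdGaussian d) := by
  have hco : ∀ i : Fin d, Integrable (fun u : EuclideanSpace ℝ (Fin d) => |u i|)
      (stdGaussian d) := fun i =>
    ((aux_measurePreserving_eval d i).integrable_comp
      measurable_abs.aestronglyMeasurable).2 aux_integrable_abs_gaussian
  have hInt : Integrable (fun u : EuclideanSpace ℝ (Fin d) => ∑ i, |u i|) (stdGaussian d) :=
    integrable_finset_sum _ (fun i _ => hco i)
  refine hInt.mono' continuous_norm.aestronglyMeasurable ?_
  filter_upwards with u
  rw [norm_norm, EuclideanSpace.norm_eq]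
  have h1 : ∑ i, ‖u i‖ ^ 2 ≤ (∑ i, |u i|) ^ 2 := by
    simpa [Real.norm_eq_abs] using
      Finset.sum_sq_le_sq_sum_of_nonneg (s := Finset.univ)
        (f := fun i : Fin d => |u i|) (fun i _ => abs_nonneg _)
  calc Real.sqrt (∑ i, ‖u i‖ ^ 2) ≤ Real.sqrt ((∑ i, |u i|) ^ 2) := Real.sqrt_le_sqrt h1
    _ = ∑ i, |u i| := Real.sqrt_sq (by positivity)

open ProbabilityTheory in
lemma aux_integrable_norm_sq (d : ℕ) :
    Integrable (fun u : EuclideanSpace ℝ (Fin d) => ‖u‖ ^ 2) (stdGaussian d) := by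
  have hco : ∀ i : Fin d, Integrable (fun u : EuclideanSpace ℝ (Fin d) => (u i) ^ 2)
      (stdGaussian d) := fun i =>
    ((aux_measurePreserving_eval d i).integrable_comp
      (by fun_prop : AEStronglyMeasurable (fun x : ℝ => x ^ 2) _)).2 aux_integrable_sq_gaussian
  have h : (fun u : EuclideanSpace ℝ (Fin d) => ‖u‖ ^ 2)
      = fun u : EuclideanSpace ℝ (Fin d) => ∑ i, (u i) ^ 2 := by
    funext u
    rw [EuclideanSpace.norm_eq, Real.sq_sqrt (by positivity)]
    simp [Real.norm_eq_abs, sq_abs]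
  rw [h]
  exact integrable_finset_sum _ (fun i _ => hco i)

/-- **Differentiability and smoothness of the μ-smooth approximation.**
If `f` has `L`-Lipschitz gradient, then the μ-smooth approximation
`f_μ(x) = ∫ f (x + μ • u) dγ_d(u)` has at every `x` the gradient
`∫ ∇f (x + μ • u) dγ_d(u)`, and this gradient is `L`-Lipschitz; in particular `f_μ` also
has `L`-Lipschitz gradient. -/
theorem smooth_approximation_gradient
    (d : ℕ) (L μ : ℝ) (hL : 0 ≤ L)
    (f : EuclideanSpace ℝ (Fin d) → ℝ)
    (hdiff : Differentiable ℝ f)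
    (hlip : ∀ x y, ‖gradient f x - gradient f y‖ ≤ L * ‖x - y‖) :
    (∀ x : EuclideanSpace ℝ (Fin d),
      HasGradientAt (fun y => ∫ u, f (y + μ • u) ∂(stdGaussian d))
        (∫ u, gradient f (x + μ • u) ∂(stdGaussian d)) x) ∧
    (∀ x y : EuclideanSpace ℝ (Fin d),
      ‖(∫ u, gradient f (x + μ • u) ∂(stdGaussian d)) -
          ∫ u, gradient f (y + μ • u) ∂(stdGaussian d)‖ ≤ L * ‖x - y‖) := by
  classical
  set γ := stdGaussian d with hγ
  haveI hprob : IsProbabilityMeasure γ := by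
    rw [hγ]; unfold stdGaussian
    exact Measure.isProbabilityMeasure_map (WithLp.measurable_toLp (p := 2) (X := Fin d → ℝ)).aemeasurable
  -- continuity of the gradient
  have hgl : LipschitzWith ⟨L, hL⟩ (gradient f) :=
    LipschitzWith.of_dist_le_mul fun x y => by
      rw [dist_eq_norm, dist_eq_norm]; exact hlip x y
  have hgc : Continuous (gradient f) := hgl.continuous
  -- quadratic upper bound
  have quad : ∀ x z : EuclideanSpace ℝ (Fin d),
      |f z - f x - ⟪gradient f x, z - x⟫| ≤ L * ‖z - x‖ * ‖z - x‖ := by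
    intro x z
    have hconv : Convex ℝ (Metric.closedBall x ‖z - x‖) := convex_closedBall _ _
    have hx : x ∈ Metric.closedBall x ‖z - x‖ := Metric.mem_closedBall_self (norm_nonneg _)
    have hz : z ∈ Metric.closedBall x ‖z - x‖ := by
      simp [Metric.mem_closedBall, dist_eq_norm]
    have hder : ∀ w ∈ Metric.closedBall x ‖z - x‖,
        HasFDerivWithinAt f (fderiv ℝ f w) (Metric.closedBall x ‖z - x‖) w :=
      fun w _ => (hdiff w).hasFDerivAt.hasFDerivWithinAt
    have hbound : ∀ w ∈ Metric.closedBall x ‖z - x‖,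
        ‖fderiv ℝ f w - fderiv ℝ f x‖ ≤ L * ‖z - x‖ := by
      intro w hw
      have h1 : fderiv ℝ f w - fderiv ℝ f x
          = (InnerProductSpace.toDual ℝ (EuclideanSpace ℝ (Fin d)))
              (gradient f w - gradient f x) := by
        rw [map_sub, gradient, gradient,
          LinearIsometryEquiv.apply_symm_apply, LinearIsometryEquiv.apply_symm_apply]
      rw [h1, LinearIsometryEquiv.norm_map]
      calc ‖gradient f w - gradient f x‖ ≤ L * ‖w - x‖ := hlip w x
        _ ≤ L * ‖z - x‖ := by
            apply mul_le_mul_of_nonneg_left _ hL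
            rw [← dist_eq_norm]
            exact hw
    have hmv := hconv.norm_image_sub_le_of_norm_hasFDerivWithin_le' hder hbound hx hz
    have happ : (fderiv ℝ f x) (z - x) = ⟪gradient f x, z - x⟫ := by
      conv_lhs => rw [show fderiv ℝ f x
        = (InnerProductSpace.toDual ℝ (EuclideanSpace ℝ (Fin d))) (gradient f x)
        from (LinearIsometryEquiv.apply_symm_apply _ _).symm]
      rw [InnerProductSpace.toDual_apply_apply]
    rw [happ] at hmv
    calc |f z - f x - ⟪gradient f x, z - x⟫|
        = ‖f z - f x - ⟪gradient f x, z - x⟫‖ := (Real.norm_eq_abs _).symm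
      _ ≤ L * ‖z - x‖ * ‖z - x‖ := hmv
  -- integrability of the gradient integrand
  have hgint : ∀ x : EuclideanSpace ℝ (Fin d),
      Integrable (fun u => gradient f (x + μ • u)) γ := by
    intro x
    have hmg : AEStronglyMeasurable (fun u : EuclideanSpace ℝ (Fin d)
        => gradient f (x + μ • u)) γ :=
      (hgc.comp (continuous_const.add (continuous_id.const_smul μ))).aestronglyMeasurable
    refine (((aux_integrable_norm d).const_mul (L * |μ|)).add
      (integrable_const ‖gradient f x‖)).mono' hmg ?_
    filter_upwards with u
    have h1 : ‖gradient f (x + μ • u) - gradient f x‖ ≤ L * |μ| * ‖u‖ := by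
      have h := hlip (x + μ • u) x
      rw [add_sub_cancel_left, norm_smul, Real.norm_eq_abs] at h
      linarith [h, mul_assoc L |μ| ‖u‖]
    have h2 : ‖gradient f (x + μ • u)‖
        ≤ ‖gradient f (x + μ • u) - gradient f x‖ + ‖gradient f x‖ := by
      simpa using norm_add_le (gradient f (x + μ • u) - gradient f x) (gradient f x)
    simp only [Pi.add_apply]
    linarith
  -- integrability of the function integrand
  have hfint : ∀ x : EuclideanSpace ℝ (Fin d),
      Integrable (fun u => f (x + μ • u)) γ := by
    intro x
    have hmf : AEStronglyMeasurable (fun u : EuclideanSpace ℝ (Fin d)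
        => f (x + μ • u)) γ :=
      (hdiff.continuous.comp
        (continuous_const.add (continuous_id.const_smul μ))).aestronglyMeasurable
    refine ((((aux_integrable_norm_sq d).const_mul (L * |μ| ^ 2)).add
      ((aux_integrable_norm d).const_mul (‖gradient f x‖ * |μ|))).add
      (integrable_const |f x|)).mono' hmf ?_
    filter_upwards with u
    have hq := quad x (x + μ • u)
    rw [add_sub_cancel_left, norm_smul, Real.norm_eq_abs] at hq
    have hi : |⟪gradient f x, μ • u⟫| ≤ ‖gradient f x‖ * (|μ| * ‖u‖) := by
      calc |⟪gradient f x, μ • u⟫| ≤ ‖gradient f x‖ * ‖μ • u‖ := abs_real_inner_le_norm _ _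
        _ = ‖gradient f x‖ * (|μ| * ‖u‖) := by rw [norm_smul, Real.norm_eq_abs]
    have habs : |f (x + μ • u)|
        ≤ |f (x + μ • u) - f x - ⟪gradient f x, μ • u⟫| + |f x| + |⟪gradient f x, μ • u⟫| := by
      have h0 : f (x + μ • u)
          = (f (x + μ • u) - f x - ⟪gradient f x, μ • u⟫) + f x + ⟪gradient f x, μ • u⟫ := by
        ring
      calc |f (x + μ • u)|
          = |(f (x + μ • u) - f x - ⟪gradient f x, μ • u⟫) + f x + ⟪gradient f x, μ • u⟫| := by
            rw [← h0]
        _ ≤ |(f (x + μ • u) - f x - ⟪gradient f x, μ • u⟫) + f x| + |⟪gradient f x, μ • u⟫| :=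
            abs_add_le _ _
        _ ≤ |f (x + μ • u) - f x - ⟪gradient f x, μ • u⟫| + |f x| + |⟪gradient f x, μ • u⟫| := by
            gcongr; exact abs_add_le _ _
    rw [Real.norm_eq_abs]
    simp only [Pi.add_apply]
    nlinarith [abs_nonneg (f (x + μ • u)), norm_nonneg u, abs_nonneg μ,
      norm_nonneg (gradient f x), sq_nonneg (|μ| * ‖u‖)]
  -- Lipschitz property of the smoothed gradient
  have hlipF : ∀ x y : EuclideanSpace ℝ (Fin d),
      ‖(∫ u, gradient f (x + μ • u) ∂γ) - ∫ u, gradient f (y + μ • u) ∂γ‖ ≤ L * ‖x - y‖ := by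
    intro x y
    rw [← integral_sub (hgint x) (hgint y)]
    calc ‖∫ u, (gradient f (x + μ • u) - gradient f (y + μ • u)) ∂γ‖
        ≤ ∫ u, ‖gradient f (x + μ • u) - gradient f (y + μ • u)‖ ∂γ :=
          norm_integral_le_integral_norm _
      _ ≤ ∫ _u, L * ‖x - y‖ ∂γ := by
          refine integral_mono ((hgint x).sub (hgint y)).norm (integrable_const _) ?_
          intro u
          have h := hlip (x + μ • u) (y + μ • u)
          rwa [add_sub_add_right_eq_sub] at h
      _ = L * ‖x - y‖ := by simp
  refine ⟨?_, hlipF⟩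
  intro x
  rw [hasGradientAt_iff_isLittleO]
  have key : ∀ y : EuclideanSpace ℝ (Fin d),
      |(∫ u, f (y + μ • u) ∂γ) - (∫ u, f (x + μ • u) ∂γ)
        - ⟪∫ u, gradient f (x + μ • u) ∂γ, y - x⟫|
      ≤ L * ‖y - x‖ * ‖y - x‖ := by
    intro y
    have hinner : ⟪∫ u, gradient f (x + μ • u) ∂γ, y - x⟫
        = ∫ u, ⟪gradient f (x + μ • u), y - x⟫ ∂γ := by
      rw [real_inner_comm, ← integral_inner (hgint x)]
      exact integral_congr_ae (Filter.Eventually.of_forall fun u => real_inner_comm _ _)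
    have hA : Integrable (fun u => f (y + μ • u) - f (x + μ • u)) γ := (hfint y).sub (hfint x)
    have hB : Integrable
        (fun u : EuclideanSpace ℝ (Fin d) => ⟪gradient f (x + μ • u), y - x⟫) γ :=
      (hgint x).inner_const _
    have heq : (∫ u, f (y + μ • u) ∂γ) - (∫ u, f (x + μ • u) ∂γ)
          - ∫ u, ⟪gradient f (x + μ • u), y - x⟫ ∂γ
        = ∫ u, (f (y + μ • u) - f (x + μ • u) - ⟪gradient f (x + μ • u), y - x⟫) ∂γ := by
      rw [integral_sub hA hB, integral_sub (hfint y) (hfint x)]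
    rw [hinner, heq]
    have hptwise : ∀ u : EuclideanSpace ℝ (Fin d),
        |f (y + μ • u) - f (x + μ • u) - ⟪gradient f (x + μ • u), y - x⟫|
        ≤ L * ‖y - x‖ * ‖y - x‖ := by
      intro u
      have hq := quad (x + μ • u) (y + μ • u)
      rwa [add_sub_add_right_eq_sub] at hq
    calc |∫ u, (f (y + μ • u) - f (x + μ • u) - ⟪gradient f (x + μ • u), y - x⟫) ∂γ|
        ≤ ∫ u, |f (y + μ • u) - f (x + μ • u) - ⟪gradient f (x + μ • u), y - x⟫| ∂γ := by
          simpa [Real.norm_eq_abs] using norm_integral_le_integral_norm (μ := γ)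
            (fun u => f (y + μ • u) - f (x + μ • u) - ⟪gradient f (x + μ • u), y - x⟫)
      _ ≤ ∫ _u, L * ‖y - x‖ * ‖y - x‖ ∂γ := by
          refine integral_mono
            (((hfint y).sub (hfint x)).sub ((hgint x).inner_const _)).abs
            (integrable_const _) hptwise
      _ = L * ‖y - x‖ * ‖y - x‖ := by simp
  rw [Asymptotics.isLittleO_iff]
  intro c hc
  have hpos : (0:ℝ) < c / (L + 1) := by positivity
  filter_upwards [Metric.ball_mem_nhds x hpos] with y hy
  have h1 : ‖y - x‖ < c / (L + 1) := by rwa [Metric.mem_ball, dist_eq_norm] at hy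
  have h2 := key y
  have h3 : L * ‖y - x‖ ≤ c := by
    have hd : L / (L + 1) ≤ 1 := by
      rw [div_le_one (by linarith)]; linarith
    calc L * ‖y - x‖ ≤ L * (c / (L + 1)) := by
          exact mul_le_mul_of_nonneg_left h1.le hL
      _ = c * (L / (L + 1)) := by ring
      _ ≤ c * 1 := by
          exact mul_le_mul_of_nonneg_left hd hc.le
      _ = c := mul_one c
  rw [Real.norm_eq_abs]
  calc |(∫ u, f (y + μ • u) ∂γ) - (∫ u, f (x + μ • u) ∂γ)
        - ⟪∫ u, gradient f (x + μ • u) ∂γ, y - x⟫|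
      ≤ L * ‖y - x‖ * ‖y - x‖ := h2
    _ ≤ c * ‖y - x‖ := mul_le_mul_of_nonneg_right h3 (norm_nonneg _)
end
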